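/- Let Q be a real-rooted polynomial with all zeros simple, and let P be a real polynomial with deg P ≤ deg Q + 1. If the Wronskian W(P,Q;x) = P(x)Q'(x) - P'(x)Q(x) is nonzero for every real x, then the zeros of P and Q strictly interlace: all zeros of both are real and simple, they share no common zero, and between any two consecutive zeros of one polynomial lies exactly one zero of the other. -/

import Mathlib

open Polynomial

/-- All zeros of `P` (viewed over `ℂ`) are real, and each real zero is simple. -/
def RealRootedSimple (P : Polynomial ℝ) : Prop :=
  (∀ z : ℂ, (P.map (algebraMap ℝ ℂ)).IsRoot z → z.im = 0) ∧
    ∀ x : ℝ, P.rootMultiplicity x ≤ 1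

/-- Strict interlacing of the zeros of two real polynomials: all zeros real and simple,
no common zeros, and between any two consecutive zeros of one polynomial lies exactly one
zero of the other. -/
def StrictInterlace (P Q : Polynomial ℝ) : Prop :=
  RealRootedSimple P ∧ RealRootedSimple Q ∧
    (∀ x : ℝ, ¬(P.IsRoot x ∧ Q.IsRoot x)) ∧
    (∀ a b : ℝ, a < b → P.IsRoot a → P.IsRoot b →
      (∀ c ∈ Set.Ioo a b, ¬ P.IsRoot c) →
      ∃! c : ℝ, c ∈ Set.Ioo a b ∧ Q.IsRoot c) ∧
    (∀ a b : ℝ, a < b → Q.IsRoot a → Q.IsRoot b →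
      (∀ c ∈ Set.Ioo a b, ¬ Q.IsRoot c) →
      ∃! c : ℝ, c ∈ Set.Ioo a b ∧ P.IsRoot c)

private lemma aux_sign {f : ℝ → ℝ} (hf : Continuous f) {x y : ℝ} (hxy : x ≤ y)
    (h : ∀ z ∈ Set.Icc x y, f z ≠ 0) : 0 < f x * f y := by
  rcases lt_trichotomy (f x) 0 with hx | hx | hx
  · rcases lt_trichotomy (f y) 0 with hy | hy | hy
    · exact mul_pos_of_neg_of_neg hx hy
    · exact absurd hy (h y ⟨hxy, le_rfl⟩)
    · obtain ⟨z, hz, hz0⟩ := intermediate_value_Icc hxy hf.continuousOn ⟨hx.le, hy.le⟩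
      exact absurd hz0 (h z hz)
  · exact absurd hx (h x ⟨le_rfl, hxy⟩)
  · rcases lt_trichotomy (f y) 0 with hy | hy | hy
    · obtain ⟨z, hz, hz0⟩ := intermediate_value_Icc' hxy hf.continuousOn ⟨hy.le, hx.le⟩
      exact absurd hz0 (h z hz)
    · exact absurd hy (h y ⟨hxy, le_rfl⟩)
    · exact mul_pos hx hy

private lemma poly_sign (p : Polynomial ℝ) {x y : ℝ} (hxy : x ≤ y)
    (h : ∀ z ∈ Set.Icc x y, p.eval z ≠ 0) : 0 < p.eval x * p.eval y :=
  aux_sign p.continuous hxy h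

private lemma deriv_nonneg_right (p : Polynomial ℝ) {a b : ℝ} (hab : a < b)
    (ha : p.eval a = 0) (hpos : ∀ x ∈ Set.Ioo a b, 0 < p.eval x) :
    0 ≤ (derivative p).eval a := by
  have hd : HasDerivAt (fun x => p.eval x) ((derivative p).eval a) a := p.hasDerivAt a
  have ht := hasDerivAt_iff_tendsto_slope.mp hd
  have ht' : Filter.Tendsto (slope (fun x => p.eval x) a) (nhdsWithin a (Set.Ioi a))
      (nhds ((derivative p).eval a)) :=
    ht.mono_left (nhdsWithin_mono a (fun x hx => ne_of_gt hx))
  refine ge_of_tendsto ht' ?_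
  filter_upwards [Ioo_mem_nhdsGT_of_mem (Set.mem_Ico.mpr ⟨le_rfl, hab⟩)] with x hx
  rw [slope_def_field]
  have h1 : 0 < p.eval x := hpos x hx
  have h2 : 0 < x - a := sub_pos.mpr hx.1
  rw [ha, sub_zero]
  positivity

private lemma deriv_nonpos_left (p : Polynomial ℝ) {a b : ℝ} (hab : a < b)
    (hb : p.eval b = 0) (hpos : ∀ x ∈ Set.Ioo a b, 0 < p.eval x) :
    (derivative p).eval b ≤ 0 := by
  have hd : HasDerivAt (fun x => p.eval x) ((derivative p).eval b) b := p.hasDerivAt b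
  have ht := hasDerivAt_iff_tendsto_slope.mp hd
  have ht' : Filter.Tendsto (slope (fun x => p.eval x) b) (nhdsWithin b (Set.Iio b))
      (nhds ((derivative p).eval b)) :=
    ht.mono_left (nhdsWithin_mono b (fun x hx => ne_of_lt hx))
  refine le_of_tendsto ht' ?_
  filter_upwards [Ioo_mem_nhdsLT_of_mem (Set.mem_Ioc.mpr ⟨hab, le_rfl⟩)] with x hx
  rw [slope_def_field]
  have h1 : 0 < p.eval x := hpos x hx
  have h2 : x - b < 0 := sub_neg.mpr hx.2
  rw [hb, sub_zero]
  exact div_nonpos_of_nonneg_of_nonpos h1.le h2.le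

private lemma root_info_of_two_le {p : Polynomial ℝ} (hp : p ≠ 0) {a : ℝ}
    (h : 2 ≤ p.rootMultiplicity a) :
    p.eval a = 0 ∧ (derivative p).eval a = 0 := by
  obtain ⟨r, hr⟩ := (Polynomial.le_rootMultiplicity_iff hp).mp h
  constructor
  · simp [hr]
  · rw [hr]
    simp [derivative_mul, derivative_pow]

private lemma exists_next_root {p : Polynomial ℝ} (hp : p ≠ 0) {c d : ℝ} (hcd : c < d)
    (hd : p.IsRoot d) :
    ∃ d', d' ∈ Set.Ioc c d ∧ p.IsRoot d' ∧ ∀ x ∈ Set.Ioo c d', ¬ p.IsRoot x := by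
  classical
  set S := p.roots.toFinset.filter (fun x => x ∈ Set.Ioc c d) with hS
  have hdS : d ∈ S := by
    simp only [hS, Finset.mem_filter, Multiset.mem_toFinset, Polynomial.mem_roots hp]
    exact ⟨hd, hcd, le_rfl⟩
  have hne : S.Nonempty := ⟨d, hdS⟩
  have hmem := S.min'_mem hne
  simp only [hS, Finset.mem_filter, Multiset.mem_toFinset, Polynomial.mem_roots hp] at hmem
  refine ⟨S.min' hne, hmem.2, hmem.1, ?_⟩
  intro x hx hroot
  have hxS : x ∈ S := by
    simp only [hS, Finset.mem_filter, Multiset.mem_toFinset, Polynomial.mem_roots hp]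
    exact ⟨hroot, hx.1, le_trans hx.2.le hmem.2.2⟩
  exact absurd (S.min'_le x hxS) (not_le.mpr hx.2)

private lemma exists_root_between_pos (p q : Polynomial ℝ)
    (hW : ∀ x : ℝ, p.eval x * (derivative q).eval x - (derivative p).eval x * q.eval x ≠ 0)
    {a b : ℝ} (hab : a < b) (ha : q.IsRoot a) (hb : q.IsRoot b)
    (hpos : ∀ c ∈ Set.Ioo a b, 0 < q.eval c) :
    ∃ c ∈ Set.Ioo a b, p.IsRoot c := by
  have ha' : q.eval a = 0 := ha
  have hb' : q.eval b = 0 := hb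
  set Wp := p * derivative q - derivative p * q with hWp
  have hWeval : ∀ x : ℝ, Wp.eval x =
      p.eval x * (derivative q).eval x - (derivative p).eval x * q.eval x := by
    intro x; simp [hWp]
  have hsame : 0 < Wp.eval a * Wp.eval b :=
    poly_sign Wp hab.le (fun z _ => by rw [hWeval]; exact hW z)
  rw [hWeval, hWeval, ha', hb'] at hsame
  simp only [mul_zero, sub_zero] at hsame
  have hqa : 0 < (derivative q).eval a := by
    have h0 : 0 ≤ (derivative q).eval a := deriv_nonneg_right q hab ha' hpos
    rcases h0.lt_or_eq with h | h
    · exact h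
    · exfalso; apply hW a; rw [ha', ← h]; ring
  have hqb : (derivative q).eval b < 0 := by
    have h0 : (derivative q).eval b ≤ 0 := deriv_nonpos_left q hab hb' hpos
    rcases h0.lt_or_eq with h | h
    · exact h
    · exfalso; apply hW b; rw [hb', h]; ring
  have hq' : (derivative q).eval a * (derivative q).eval b < 0 := mul_neg_of_pos_of_neg hqa hqb
  have hpab : p.eval a * p.eval b < 0 := by nlinarith [hsame, hq']
  rcases lt_trichotomy (p.eval a) 0 with hpa | hpa | hpa
  · have hpb : 0 < p.eval b := by nlinarith
    obtain ⟨c, hc, hc0⟩ := intermediate_value_Ioo hab.le p.continuous.continuousOn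
      (Set.mem_Ioo.mpr ⟨hpa, hpb⟩)
    exact ⟨c, hc, hc0⟩
  · exfalso; rw [hpa] at hpab; simp at hpab
  · have hpb : p.eval b < 0 := by nlinarith
    obtain ⟨c, hc, hc0⟩ := intermediate_value_Ioo' hab.le p.continuous.continuousOn
      (Set.mem_Ioo.mpr ⟨hpb, hpa⟩)
    exact ⟨c, hc, hc0⟩

private lemma exists_root_between (p q : Polynomial ℝ)
    (hW : ∀ x : ℝ, p.eval x * (derivative q).eval x - (derivative p).eval x * q.eval x ≠ 0)
    {a b : ℝ} (hab : a < b) (ha : q.IsRoot a) (hb : q.IsRoot b)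
    (hmid : ∀ c ∈ Set.Ioo a b, ¬ q.IsRoot c) :
    ∃ c ∈ Set.Ioo a b, p.IsRoot c := by
  have hm : (a + b) / 2 ∈ Set.Ioo a b := ⟨by linarith, by linarith⟩
  have hmne : q.eval ((a + b) / 2) ≠ 0 := hmid _ hm
  have hsign : ∀ x ∈ Set.Ioo a b, 0 < q.eval x * q.eval ((a + b) / 2) := by
    intro x hx
    rcases le_total x ((a + b) / 2) with hle | hle
    · exact poly_sign q hle (fun z hz => hmid z ⟨lt_of_lt_of_le hx.1 hz.1, lt_of_le_of_lt hz.2 hm.2⟩)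
    · have := poly_sign q hle (fun z hz => hmid z ⟨lt_of_lt_of_le hm.1 hz.1, lt_of_le_of_lt hz.2 hx.2⟩)
      nlinarith
  rcases hmne.lt_or_gt with hneg | hposm
  · -- q negative on Ioo; use -q
    have hW' : ∀ x : ℝ, p.eval x * (derivative (-q)).eval x
        - (derivative p).eval x * (-q).eval x ≠ 0 := by
      intro x h
      apply hW x
      simp only [derivative_neg, eval_neg] at h
      linarith
    have ha' : (-q).IsRoot a := by simp [IsRoot.def] at ha ⊢; exact ha
    have hb' : (-q).IsRoot b := by simp [IsRoot.def] at hb ⊢; exact hb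
    have hpos : ∀ c ∈ Set.Ioo a b, 0 < (-q).eval c := by
      intro c hc
      have := hsign c hc
      simp only [eval_neg]
      nlinarith
    exact exists_root_between_pos p (-q) hW' hab ha' hb' hpos
  · have hpos : ∀ c ∈ Set.Ioo a b, 0 < q.eval c := by
      intro c hc
      have := hsign c hc
      nlinarith
    exact exists_root_between_pos p q hW hab ha hb hpos

private lemma exactly_one (p q : Polynomial ℝ) (hp0 : p ≠ 0)
    (hW : ∀ x : ℝ, p.eval x * (derivative q).eval x - (derivative p).eval x * q.eval x ≠ 0)
    {a b : ℝ} (hab : a < b) (ha : q.IsRoot a) (hb : q.IsRoot b)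
    (hmid : ∀ c ∈ Set.Ioo a b, ¬ q.IsRoot c) :
    ∃! c : ℝ, c ∈ Set.Ioo a b ∧ p.IsRoot c := by
  have hW' : ∀ x : ℝ, q.eval x * (derivative p).eval x - (derivative q).eval x * p.eval x ≠ 0 := by
    intro x h; apply hW x; linarith
  obtain ⟨c, hc, hcr⟩ := exists_root_between p q hW hab ha hb hmid
  have key : ∀ u v : ℝ, u < v → u ∈ Set.Ioo a b → v ∈ Set.Ioo a b →
      p.IsRoot u → p.IsRoot v → False := by
    intro u v huv hu hv hur hvr
    obtain ⟨v', hv', hv'r, hnone⟩ := exists_next_root hp0 huv hvr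
    obtain ⟨w, hw, hwr⟩ := exists_root_between q p hW' hv'.1 hur hv'r hnone
    exact hmid w ⟨lt_trans hu.1 hw.1, lt_of_lt_of_le hw.2 (le_trans hv'.2 hv.2.le)⟩ hwr
  refine ⟨c, ⟨hc, hcr⟩, ?_⟩
  rintro y ⟨hy, hyr⟩
  by_contra hne
  rcases (Ne.lt_or_gt hne) with h | h
  · exact key y c h hy hc hyr hcr
  · exact key c y h hc hy hcr hyr

private lemma eval_map_real (P : Polynomial ℝ) (y : ℝ) :
    (P.map (algebraMap ℝ ℂ)).eval ((y : ℝ) : ℂ) = ((P.eval y : ℝ) : ℂ) := by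
  rw [show ((y : ℝ) : ℂ) = algebraMap ℝ ℂ y from rfl, eval_map, eval₂_hom]
  rfl

private lemma conj_root {P : Polynomial ℝ} {z : ℂ} (hz : (P.map (algebraMap ℝ ℂ)).IsRoot z) :
    (P.map (algebraMap ℝ ℂ)).IsRoot ((starRingEnd ℂ) z) := by
  have hmap : (P.map (algebraMap ℝ ℂ)).map (starRingEnd ℂ) = P.map (algebraMap ℝ ℂ) := by
    rw [map_map]
    congr 1
    ext x
    simp [Complex.conj_ofReal]
  have : ((P.map (algebraMap ℝ ℂ)).map (starRingEnd ℂ)).eval ((starRingEnd ℂ) z)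
      = (starRingEnd ℂ) ((P.map (algebraMap ℝ ℂ)).eval z) := by
    rw [eval_map, eval₂_hom]
  rw [IsRoot.def, ← hmap, this, hz]
  simp

private lemma card_roots_real : ∀ (m : ℕ) (Q : Polynomial ℝ), Q.natDegree = m → Q ≠ 0 →
    (∀ z : ℂ, (Q.map (algebraMap ℝ ℂ)).IsRoot z → z.im = 0) →
    Multiset.card Q.roots = Q.natDegree := by
  intro m
  induction m using Nat.strong_induction_on with
  | _ m ih =>
    intro Q hm hQ0 hreal
    rcases Nat.eq_zero_or_pos m with h0 | hpos
    · have := Polynomial.card_roots' Q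
      omega
    · have hdeg : (0 : WithBot ℕ) < Q.degree := by
        rw [← natDegree_pos_iff_degree_pos]; omega
      have hdeg' : (Q.map (algebraMap ℝ ℂ)).degree ≠ 0 := by
        rw [degree_map]; exact (lt_iff_le_and_ne.mp hdeg).2.symm
      obtain ⟨z, hz⟩ := Complex.isAlgClosed.exists_root _ hdeg'
      have hzim := hreal z hz
      have hzr : z = ((z.re : ℝ) : ℂ) := by
        apply Complex.ext <;> simp [hzim]
      have hr : Q.eval z.re = 0 := by
        have h2 := hz
        rw [IsRoot.def, hzr, eval_map_real] at h2
        exact_mod_cast h2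
      obtain ⟨Q₁, hQ₁⟩ := Polynomial.dvd_iff_isRoot.mpr hr
      have hQ₁0 : Q₁ ≠ 0 := by
        rintro rfl; rw [mul_zero] at hQ₁; exact hQ0 hQ₁
      have hXr : (X - C z.re : Polynomial ℝ) ≠ 0 := X_sub_C_ne_zero z.re
      have hdegs : Q.natDegree = 1 + Q₁.natDegree := by
        rw [hQ₁, natDegree_mul hXr hQ₁0, natDegree_X_sub_C]
      have hreal₁ : ∀ w : ℂ, (Q₁.map (algebraMap ℝ ℂ)).IsRoot w → w.im = 0 := by
        intro w hw
        apply hreal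
        rw [hQ₁, Polynomial.map_mul, IsRoot.def, eval_mul, hw, mul_zero]
      have hcard₁ := ih Q₁.natDegree (by omega) Q₁ rfl hQ₁0 hreal₁
      have hrootsQ : Q.roots = (X - C z.re).roots + Q₁.roots := by
        rw [hQ₁, roots_mul (hQ₁ ▸ hQ0)]
      rw [hrootsQ, Multiset.card_add, roots_X_sub_C, Multiset.card_singleton, hcard₁]
      omega

private lemma ev_sign (p : Polynomial ℝ) (hp : p ≠ 0) :
    ∀ᶠ x in Filter.atTop, 0 < p.leadingCoeff * p.eval x := by
  have hlc : p.leadingCoeff ≠ 0 := leadingCoeff_ne_zero.mpr hp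
  rcases le_or_gt p.degree 0 with hd | hd
  · have hpc := Polynomial.eq_C_of_degree_le_zero hd
    refine Filter.Eventually.of_forall (fun x => ?_)
    have h0 : p.natDegree = 0 := Nat.le_zero.mp (natDegree_le_iff_degree_le.mpr hd)
    have hev : p.eval x = p.leadingCoeff := by
      conv_lhs => rw [hpc]
      rw [eval_C, Polynomial.leadingCoeff, h0]
    rw [hev]
    exact mul_self_pos.mpr hlc
  · rcases hlc.lt_or_gt with hneg | hposl
    · have := p.tendsto_atBot_of_leadingCoeff_nonpos hd hneg.le
      filter_upwards [this.eventually_lt_atBot 0] with x hx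
      exact mul_pos_of_neg_of_neg hneg hx
    · have := p.tendsto_atTop_of_leadingCoeff_nonneg hd hposl.le
      filter_upwards [this.eventually_gt_atTop 0] with x hx
      exact mul_pos hposl hx

private lemma sgn_mul {a x y : ℝ} (h1 : 0 < a * y) (h2 : 0 < x * y) : 0 < a * x := by
  nlinarith [mul_pos h1 h2, sq_nonneg y]

private lemma complex_roots_real (P Q : Polynomial ℝ)
    (hQreal : ∀ z : ℂ, (Q.map (algebraMap ℝ ℂ)).IsRoot z → z.im = 0)
    (hQsimple : ∀ x : ℝ, Q.rootMultiplicity x ≤ 1)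
    (hdeg : P.natDegree ≤ Q.natDegree + 1)
    (hW : ∀ x : ℝ, P.eval x * (derivative Q).eval x - (derivative P).eval x * Q.eval x ≠ 0) :
    ∀ z : ℂ, (P.map (algebraMap ℝ ℂ)).IsRoot z → z.im = 0 := by
  classical
  intro z hz
  by_contra him
  have hP0 : P ≠ 0 := by rintro rfl; exact hW 0 (by simp)
  have hQ0 : Q ≠ 0 := by rintro rfl; exact hW 0 (by simp)
  have hmP0 : P.map (algebraMap ℝ ℂ) ≠ 0 := Polynomial.map_ne_zero hP0
  set n := Q.natDegree with hn
  have hQcard : Multiset.card Q.roots = n := card_roots_real n Q rfl hQ0 hQreal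
  have hnodup : Q.roots.Nodup := by
    rw [Multiset.nodup_iff_count_le_one]
    intro x
    rw [Polynomial.count_roots]
    exact hQsimple x
  set T := Q.roots.toFinset with hT
  have hTcard : T.card = n := by
    rw [hT, Multiset.toFinset_card_of_nodup hnodup, hQcard]
  have hTmem : ∀ x : ℝ, x ∈ T ↔ Q.IsRoot x := by
    intro x; rw [hT, Multiset.mem_toFinset, Polynomial.mem_roots hQ0]
  set e := T.orderIsoOfFin hTcard with he
  have hroot : ∀ k : Fin n, Q.IsRoot (e k : ℝ) := fun k => (hTmem _).mp (e k).2
  have hn1 : ∀ i : Fin (n - 1), i.1 < n := fun i => by have := i.2; omega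
  have hn2 : ∀ i : Fin (n - 1), i.1 + 1 < n := fun i => by have := i.2; omega
  set A : Fin (n - 1) → ℝ := fun i => (e ⟨i.1, hn1 i⟩ : ℝ) with hA
  set B : Fin (n - 1) → ℝ := fun i => (e ⟨i.1 + 1, hn2 i⟩ : ℝ) with hB
  have hgapAB : ∀ i : Fin (n - 1), A i < B i := by
    intro i
    exact Subtype.coe_lt_coe.mpr (e.strictMono (by simp [Fin.lt_def]))
  have hrootA : ∀ i, Q.IsRoot (A i) := fun i => hroot _
  have hrootB : ∀ i, Q.IsRoot (B i) := fun i => hroot _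
  have hmidAB : ∀ i : Fin (n - 1), ∀ c ∈ Set.Ioo (A i) (B i), ¬ Q.IsRoot c := by
    intro i c hc hcr
    obtain ⟨k, hk⟩ := e.surjective ⟨c, (hTmem c).mpr hcr⟩
    have hkc : (e k : ℝ) = c := congrArg Subtype.val hk
    have h1 : (⟨i.1, hn1 i⟩ : Fin n) < k := by
      apply e.lt_iff_lt.mp
      apply Subtype.coe_lt_coe.mp
      rw [hkc]; exact hc.1
    have h2 : k < (⟨i.1 + 1, hn2 i⟩ : Fin n) := by
      apply e.lt_iff_lt.mp
      apply Subtype.coe_lt_coe.mp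
      rw [hkc]; exact hc.2
    rw [Fin.lt_def] at h1 h2
    simp at h1 h2
    omega
  have hgapc : ∀ i : Fin (n - 1), ∃ c ∈ Set.Ioo (A i) (B i), P.IsRoot c :=
    fun i => exists_root_between P Q hW (hgapAB i) (hrootA i) (hrootB i) (hmidAB i)
  choose g hg1 hg2 using hgapc
  have hgmono : ∀ i j : Fin (n - 1), i.1 < j.1 → g i < g j := by
    intro i j hij
    have h1 : g i < B i := (hg1 i).2
    have h3 : A j < g j := (hg1 j).1
    have h2 : B i ≤ A j := by
      rw [hB, hA]
      exact Subtype.coe_le_coe.mpr (e.monotone (by simp [Fin.le_def]; omega))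
    linarith
  have ginj : Function.Injective g := by
    intro i j hij
    rcases lt_trichotomy i.1 j.1 with h | h | h
    · exact absurd hij (ne_of_lt (hgmono i j h))
    · exact Fin.ext h
    · exact absurd hij.symm (ne_of_lt (hgmono j i h))
  set gs : Multiset ℝ := Multiset.map g Finset.univ.val with hgs
  have hgscard : Multiset.card gs = n - 1 := by simp [hgs]
  have hgsnodup : gs.Nodup := Multiset.Nodup.map ginj Finset.univ.nodup
  set M : Multiset ℂ := z ::ₘ (starRingEnd ℂ) z ::ₘ Multiset.map (fun x : ℝ => (x : ℂ)) gs
    with hM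
  have hconjim : ((starRingEnd ℂ) z).im = -z.im := Complex.conj_im z
  have hMnodup : M.Nodup := by
    rw [hM]
    refine Multiset.nodup_cons.mpr ⟨?_, Multiset.nodup_cons.mpr ⟨?_, ?_⟩⟩
    · intro hmem
      rcases Multiset.mem_cons.mp hmem with h | h
      · have := congrArg Complex.im h
        rw [hconjim] at this
        exact him (by linarith)
      · obtain ⟨x, _, hx⟩ := Multiset.mem_map.mp h
        have := congrArg Complex.im hx
        simp at this
        exact him this.symm
    · intro hmem
      obtain ⟨x, _, hx⟩ := Multiset.mem_map.mp hmem
      have := congrArg Complex.im hx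
      rw [hconjim] at this
      simp at this
      exact him (by linarith)
    · exact Multiset.Nodup.map Complex.ofReal_injective hgsnodup
  have hMsub : M ⊆ (P.map (algebraMap ℝ ℂ)).roots := by
    intro w hw
    rw [Polynomial.mem_roots hmP0]
    rw [hM] at hw
    rcases Multiset.mem_cons.mp hw with rfl | hw
    · exact hz
    rcases Multiset.mem_cons.mp hw with rfl | hw
    · exact conj_root hz
    · obtain ⟨x, hxgs, rfl⟩ := Multiset.mem_map.mp hw
      obtain ⟨i, _, rfl⟩ := Multiset.mem_map.mp hxgs
      rw [IsRoot.def, eval_map_real]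
      rw [hg2 i]
      simp
  have hMle : M ≤ (P.map (algebraMap ℝ ℂ)).roots := (Multiset.le_iff_subset hMnodup).mpr hMsub
  have hMcard : Multiset.card M = 2 + (n - 1) := by
    rw [hM]
    simp [hgscard]
    omega
  have hchain : 2 + (n - 1) ≤ P.natDegree := by
    rw [← hMcard]
    calc Multiset.card M ≤ Multiset.card (P.map (algebraMap ℝ ℂ)).roots :=
          Multiset.card_le_card hMle
      _ ≤ (P.map (algebraMap ℝ ℂ)).natDegree := Polynomial.card_roots' _
      _ = P.natDegree := natDegree_map _
  have hnpos : 1 ≤ n := by omega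
  have hdP : P.natDegree = n + 1 := by omega
  have hMeq : M = (P.map (algebraMap ℝ ℂ)).roots := by
    apply Multiset.eq_of_le_of_card_le hMle
    have := Polynomial.card_roots' (P.map (algebraMap ℝ ℂ))
    rw [natDegree_map (algebraMap ℝ ℂ)] at this
    omega
  have hrealroots : ∀ y : ℝ, P.IsRoot y → ∃ i, g i = y := by
    intro y hy
    have hyc : ((y : ℝ) : ℂ) ∈ (P.map (algebraMap ℝ ℂ)).roots := by
      rw [Polynomial.mem_roots hmP0, IsRoot.def, eval_map_real, hy]
      simp
    rw [← hMeq, hM] at hyc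
    rcases Multiset.mem_cons.mp hyc with h | hyc
    · exact absurd (congrArg Complex.im h.symm) (by simpa using him)
    rcases Multiset.mem_cons.mp hyc with h | hyc
    · exfalso
      have := congrArg Complex.im h.symm
      rw [hconjim] at this
      simp at this
      exact him (by linarith)
    · obtain ⟨x, hxgs, hx⟩ := Multiset.mem_map.mp hyc
      obtain ⟨i, _, rfl⟩ := Multiset.mem_map.mp hxgs
      exact ⟨i, Complex.ofReal_injective hx⟩
  set xm : ℝ := (e ⟨n - 1, by omega⟩ : ℝ) with hxm
  have hQxm : Q.IsRoot xm := hroot _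
  have hQabove : ∀ x : ℝ, xm < x → Q.eval x ≠ 0 := by
    intro x hx hx0
    obtain ⟨k, hk⟩ := e.surjective ⟨x, (hTmem x).mpr hx0⟩
    have hkc : (e k : ℝ) = x := congrArg Subtype.val hk
    have hle : (e k : ℝ) ≤ xm := by
      rw [hxm]
      refine Subtype.coe_le_coe.mpr (e.monotone ?_)
      simp [Fin.le_def]
      have := k.2; omega
    rw [hkc] at hle
    exact absurd hle (not_le.mpr hx)
  have hBle : ∀ i : Fin (n - 1), B i ≤ xm := by
    intro i
    rw [hB, hxm]
    refine Subtype.coe_le_coe.mpr (e.monotone ?_)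
    simp [Fin.le_def]
  have hPabove : ∀ x : ℝ, xm ≤ x → P.eval x ≠ 0 := by
    intro x hx hx0
    obtain ⟨i, hi⟩ := hrealroots x hx0
    have h1 := (hg1 i).2
    have h2 := hBle i
    rw [hi] at h1
    linarith
  set a := P.leadingCoeff with ha'
  set b := Q.leadingCoeff with hb'
  have ha0 : a ≠ 0 := leadingCoeff_ne_zero.mpr hP0
  have hb0 : b ≠ 0 := leadingCoeff_ne_zero.mpr hQ0
  have hcast : ((n - 1 : ℕ) : ℝ) + 1 = (n : ℝ) := by
    rw [Nat.cast_sub hnpos]; push_cast; ring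
  have hQ'c : (derivative Q).coeff (n - 1) = b * n := by
    rw [coeff_derivative, show n - 1 + 1 = n by omega, hcast]
    rw [hb', Polynomial.leadingCoeff, ← hn]
  have hQ'cne : (derivative Q).coeff (n - 1) ≠ 0 := by
    rw [hQ'c]
    exact mul_ne_zero hb0 (Nat.cast_ne_zero.mpr (by omega))
  have hdQ' : (derivative Q).natDegree = n - 1 := by
    refine le_antisymm ?_ (le_natDegree_of_ne_zero hQ'cne)
    have := natDegree_derivative_le Q
    omega
  have hP'c : (derivative P).coeff n = a * ((n : ℝ) + 1) := by
    rw [coeff_derivative]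
    rw [ha', Polynomial.leadingCoeff, hdP]
  have hP'cne : (derivative P).coeff n ≠ 0 := by
    rw [hP'c]
    refine mul_ne_zero ha0 ?_
    positivity
  have hdP' : (derivative P).natDegree = n := by
    refine le_antisymm ?_ (le_natDegree_of_ne_zero hP'cne)
    have := natDegree_derivative_le P
    omega
  set Wp := P * derivative Q - derivative P * Q with hWp
  have hWeval : ∀ x : ℝ, Wp.eval x =
      P.eval x * (derivative Q).eval x - (derivative P).eval x * Q.eval x := by
    intro x; simp [hWp]
  have hWne : Wp ≠ 0 := by
    intro h
    apply hW 0
    have := hWeval 0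
    rw [h] at this
    simpa using this.symm
  have hc1 : (P * derivative Q).coeff (2 * n) = a * (b * n) := by
    have h := coeff_mul_degree_add_degree P (derivative Q)
    rw [Polynomial.leadingCoeff, Polynomial.leadingCoeff, hdP, hdQ', hQ'c,
      show n + 1 + (n - 1) = 2 * n by omega] at h
    rw [h, ha', Polynomial.leadingCoeff, hdP]
  have hc2 : (derivative P * Q).coeff (2 * n) = a * ((n : ℝ) + 1) * b := by
    have h := coeff_mul_degree_add_degree (derivative P) Q
    rw [Polynomial.leadingCoeff, Polynomial.leadingCoeff, hdP', hP'c, ← hn,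
      show n + n = 2 * n by omega] at h
    rw [h, hb', Polynomial.leadingCoeff, ← hn]
  have hWc : Wp.coeff (2 * n) = -(a * b) := by
    rw [hWp, coeff_sub, hc1, hc2]; ring
  have hab0 : -(a * b) ≠ 0 := neg_ne_zero.mpr (mul_ne_zero ha0 hb0)
  have hWdeg : Wp.natDegree = 2 * n := by
    refine le_antisymm ?_ (le_natDegree_of_ne_zero (by rw [hWc]; exact hab0))
    refine le_trans (natDegree_sub_le _ _) (max_le ?_ ?_)
    · refine le_trans (natDegree_mul_le) ?_
      rw [hdP, hdQ']; omega
    · refine le_trans (natDegree_mul_le) ?_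
      rw [hdP', ← hn]; omega
  have hWlead : Wp.leadingCoeff = -(a * b) := by
    rw [Polynomial.leadingCoeff, hWdeg, hWc]
  obtain ⟨y, ⟨⟨h1, h2⟩, h3⟩, hy⟩ := ((((ev_sign P hP0).and (ev_sign Q hQ0)).and
    (ev_sign Wp hWne)).and (Filter.eventually_gt_atTop xm)).exists
  rw [hWlead] at h3
  rw [← ha'] at h1
  rw [← hb'] at h2
  have hPy : P.eval y ≠ 0 := hPabove y hy.le
  have hWsame : 0 < Wp.eval xm * Wp.eval y :=
    poly_sign Wp hy.le (fun s _ => by rw [hWeval]; exact hW s)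
  have hPx : 0 < P.eval xm * P.eval y :=
    poly_sign P hy.le (fun s hs => hPabove s hs.1)
  have hQpos : ∀ s ∈ Set.Ioo xm y, 0 < (C b * Q).eval s := by
    intro s hs
    have h4 : 0 < Q.eval s * Q.eval y :=
      poly_sign Q hs.2.le (fun u hu => hQabove u (lt_of_lt_of_le hs.1 hu.1))
    rw [eval_mul, eval_C]
    exact sgn_mul h2 h4
  have hQxm' : Q.eval xm = 0 := hQxm
  have hCbQ : (C b * Q).eval xm = 0 := by rw [eval_mul, eval_C, hQxm', mul_zero]
  have hQd : 0 ≤ (derivative (C b * Q)).eval xm := deriv_nonneg_right _ hy hCbQ hQpos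
  have hQd' : 0 ≤ b * (derivative Q).eval xm := by
    rwa [derivative_C_mul, eval_mul, eval_C] at hQd
  have hQ'xm : (derivative Q).eval xm ≠ 0 := by
    intro h
    apply hW xm
    rw [h, hQxm']; ring
  have hQdpos : 0 < b * (derivative Q).eval xm :=
    lt_of_le_of_ne hQd' (Ne.symm (mul_ne_zero hb0 hQ'xm))
  have hWxm : Wp.eval xm = P.eval xm * (derivative Q).eval xm := by
    rw [hWeval, hQxm']; ring
  have s1 : 0 < a * P.eval xm := sgn_mul h1 hPx
  have t1 : 0 < a * b * Wp.eval xm := by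
    rw [hWxm, show a * b * (P.eval xm * (derivative Q).eval xm)
      = (a * P.eval xm) * (b * (derivative Q).eval xm) by ring]
    exact mul_pos s1 hQdpos
  have t2 : 0 < -(a * b) * Wp.eval xm := by
    have h5 : 0 < Wp.eval xm * Wp.eval y := hWsame
    exact sgn_mul h3 h5
  linarith [t1, t2]

/-- If `Q` is real-rooted with simple zeros, `deg P ≤ deg Q + 1` and the Wronskian
`W(P,Q;x) = P(x)Q'(x) - P'(x)Q(x)` never vanishes on `ℝ`, then the zeros of `P` and `Q`
strictly interlace. -/
theorem stmt0 (P Q : Polynomial ℝ) (hQ : RealRootedSimple Q)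
    (hdeg : P.natDegree ≤ Q.natDegree + 1)
    (hW : ∀ x : ℝ,
      P.eval x * (derivative Q).eval x - (derivative P).eval x * Q.eval x ≠ 0) :
    StrictInterlace P Q := by
  have hP0 : P ≠ 0 := by rintro rfl; exact hW 0 (by simp)
  have hQ0 : Q ≠ 0 := by rintro rfl; exact hW 0 (by simp)
  have hW' : ∀ x : ℝ,
      Q.eval x * (derivative P).eval x - (derivative Q).eval x * P.eval x ≠ 0 := by
    intro x h; apply hW x; linarith
  have hPsimple : ∀ x : ℝ, P.rootMultiplicity x ≤ 1 := by
    intro x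
    by_contra h
    push_neg at h
    obtain ⟨h1, h2⟩ := root_info_of_two_le hP0 h
    exact hW x (by rw [h1, h2]; ring)
  have hnc : ∀ x : ℝ, ¬(P.IsRoot x ∧ Q.IsRoot x) := by
    rintro x ⟨h1, h2⟩
    exact hW x (by rw [IsRoot.def] at h1 h2; rw [h1, h2]; ring)
  refine ⟨⟨complex_roots_real P Q hQ.1 hQ.2 hdeg hW, hPsimple⟩, hQ, hnc, ?_, ?_⟩
  · intro a b hab ha hb hmid
    exact exactly_one Q P hQ0 hW' hab ha hb hmid
  · intro a b hab ha hb hmid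
    exact exactly_one P Q hP0 hW hab ha hb hmid
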